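/- Let F be a field of characteristic 2 and a, b, c, d ∈ F×. If [F²(a,b,c,d) : F²] ≤ 8, then the symbol {a,b,c,d}₂ is trivial in K₄(F)/2K₄(F); equivalently, the 4-fold bilinear Pfister form ⟨⟨a,b,c,d⟩⟩ is metabolic. -/

import Mathlib

namespace Milnor

variable (F : Type*) [Field F]

/-- Relations defining the Milnor K-group `K_n(F)`: multiplicativity in each
slot and the Steinberg relation. -/
def rels (n : ℕ) : AddSubgroup (FreeAbelianGroup (Fin n → Fˣ)) :=
  AddSubgroup.closure
    ({ x | ∃ (i : Fin n) (u v w : Fin n → Fˣ),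
        (∀ j, j ≠ i → u j = v j ∧ u j = w j) ∧ w i = u i * v i ∧
        x = FreeAbelianGroup.of w - FreeAbelianGroup.of u - FreeAbelianGroup.of v } ∪
     { x | ∃ (i j : Fin n) (u : Fin n → Fˣ), i ≠ j ∧ (u i : F) + (u j : F) = 1 ∧
        x = FreeAbelianGroup.of u })

/-- The Milnor K-group `K_n(F)`. -/
def K (n : ℕ) := FreeAbelianGroup (Fin n → Fˣ) ⧸ rels F n

instance (n : ℕ) : AddCommGroup (K F n) :=
  QuotientAddGroup.Quotient.addCommGroup _

/-- The subgroup `2^m K_n(F)` of `K_n(F)`. -/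
def modSub (n m : ℕ) : AddSubgroup (K F n) :=
  AddSubgroup.closure { x | ∃ y : K F n, x = (2 ^ m) • y }

/-- The quotient `K_n(F)/2^m K_n(F)`. -/
def KMod (n m : ℕ) := K F n ⧸ modSub F n m

instance (n m : ℕ) : AddCommGroup (KMod F n m) :=
  QuotientAddGroup.Quotient.addCommGroup _

variable {F}

/-- The class of the symbol `{v 0, …, v (n-1)}` in `K_n(F)/2^m K_n(F)`. -/
def symbol {n : ℕ} (m : ℕ) (v : Fin n → Fˣ) : KMod F n m :=
  QuotientAddGroup.mk (QuotientAddGroup.mk (FreeAbelianGroup.of v) : K F n)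

open scoped Classical in
/-- `{a,b}` in `K₂(F)/2^m K₂(F)` for field elements, with junk value `0` if an
entry vanishes.  So `s2 1 a b` is `{a,b}₂` and `s2 2 a b` is `{a,b}₄`. -/
noncomputable def s2 (m : ℕ) (a b : F) : KMod F 2 m :=
  if h : a ≠ 0 ∧ b ≠ 0 then symbol m ![Units.mk0 a h.1, Units.mk0 b h.2] else 0

open scoped Classical in
/-- `{a,b,c,d}` in `K₄(F)/2^m K₄(F)` for field elements, junk value `0`. -/
noncomputable def s4 (m : ℕ) (a b c d : F) : KMod F 4 m :=
  if h : a ≠ 0 ∧ b ≠ 0 ∧ c ≠ 0 ∧ d ≠ 0 then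
    symbol m ![Units.mk0 a h.1, Units.mk0 b h.2.1, Units.mk0 c h.2.2.1, Units.mk0 d h.2.2.2]
  else 0

end Milnor

open Milnor

/-- The subfield `F²` of squares of a field of characteristic 2. -/
def sqSubfield (F : Type*) [Field F] : Subfield F :=
  Subfield.closure { x : F | ∃ y : F, x = y ^ 2 }

/-! ### Auxiliary development for `stmt5`. -/

namespace Stmt5Aux

variable {F : Type*} [Field F]

/-! #### Basic relations in the Milnor K-group -/

theorem symbol_mul {n m : ℕ} (i : Fin n) (u v w : Fin n → Fˣ)
    (hj : ∀ j, j ≠ i → u j = v j ∧ u j = w j) (hw : w i = u i * v i) :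
    (symbol m w : KMod F n m) = symbol m u + symbol m v := by
  have h1 : (QuotientAddGroup.mk (FreeAbelianGroup.of w) : K F n)
      = QuotientAddGroup.mk (FreeAbelianGroup.of u + FreeAbelianGroup.of v) := by
    rw [QuotientAddGroup.eq_iff_sub_mem]
    apply AddSubgroup.subset_closure
    left
    exact ⟨i, u, v, w, hj, hw, by abel⟩
  unfold symbol
  rw [h1, QuotientAddGroup.mk_add]
  rfl

theorem symbol_steinberg {n m : ℕ} (i j : Fin n) (hij : i ≠ j) (u : Fin n → Fˣ)
    (h : (u i : F) + (u j : F) = 1) : (symbol m u : KMod F n m) = 0 := by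
  have h1 : (QuotientAddGroup.mk (FreeAbelianGroup.of u) : K F n) = 0 := by
    rw [QuotientAddGroup.eq_zero_iff]
    apply AddSubgroup.subset_closure
    right
    exact ⟨i, j, u, hij, h, rfl⟩
  unfold symbol
  rw [h1]
  rfl

theorem kmod_add_self {n : ℕ} (t : KMod F n 1) : t + t = 0 := by
  induction t using QuotientAddGroup.induction_on with
  | H y =>
    change (QuotientAddGroup.mk (y + y) : K F n ⧸ modSub F n 1) = 0
    rw [QuotientAddGroup.eq_zero_iff]
    apply AddSubgroup.subset_closure
    exact ⟨y, by rw [pow_one, two_nsmul]⟩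

theorem kmod_cancel {n : ℕ} {s t : KMod F n 1} (h : s + t = 0) : s = t := by
  have h2 := kmod_add_self t
  have : s + t = t + t := by rw [h, h2]
  exact add_right_cancel this

/-- The 4-fold symbol mod 2, at the level of units. -/
def SU (x y z w : Fˣ) : KMod F 4 1 := symbol 1 ![x, y, z, w]

section SU

variable (x x' y y' z z' w w' : Fˣ)

theorem SU_mul0 : SU (x * x') y z w = SU x y z w + SU x' y z w := by
  refine symbol_mul 0 ![x, y, z, w] ![x', y, z, w] ![x * x', y, z, w] ?_ rfl
  intro j hj; fin_cases j <;> simp_all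

theorem SU_mul1 : SU x (y * y') z w = SU x y z w + SU x y' z w := by
  refine symbol_mul 1 ![x, y, z, w] ![x, y', z, w] ![x, y * y', z, w] ?_ rfl
  intro j hj; fin_cases j <;> simp_all

theorem SU_mul2 : SU x y (z * z') w = SU x y z w + SU x y z' w := by
  refine symbol_mul 2 ![x, y, z, w] ![x, y, z', w] ![x, y, z * z', w] ?_ rfl
  intro j hj; fin_cases j <;> simp_all

theorem SU_mul3 : SU x y z (w * w') = SU x y z w + SU x y z w' := by
  refine symbol_mul 3 ![x, y, z, w] ![x, y, z, w'] ![x, y, z, w * w'] ?_ rfl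
  intro j hj; fin_cases j <;> simp_all

theorem SU_sq0 : SU (x * x) y z w = 0 := by rw [SU_mul0]; exact kmod_add_self _
theorem SU_sq1 : SU x (y * y) z w = 0 := by rw [SU_mul1]; exact kmod_add_self _
theorem SU_sq2 : SU x y (z * z) w = 0 := by rw [SU_mul2]; exact kmod_add_self _
theorem SU_sq3 : SU x y z (w * w) = 0 := by rw [SU_mul3]; exact kmod_add_self _

theorem SU_one0 : SU 1 y z w = 0 := by
  have := SU_sq0 (1 : Fˣ) y z w; rwa [mul_one] at this
theorem SU_one1 : SU x 1 z w = 0 := by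
  have := SU_sq1 x (1 : Fˣ) z w; rwa [mul_one] at this
theorem SU_one2 : SU x y 1 w = 0 := by
  have := SU_sq2 x y (1 : Fˣ) w; rwa [mul_one] at this
theorem SU_one3 : SU x y z 1 = 0 := by
  have := SU_sq3 x y z (1 : Fˣ); rwa [mul_one] at this

theorem SU_inv0 : SU x⁻¹ y z w = SU x y z w := by
  refine (kmod_cancel ?_).symm
  have h := SU_mul0 x x⁻¹ y z w
  rw [mul_inv_cancel] at h
  rw [← h]; exact SU_one0 y z w

theorem SU_inv1 : SU x y⁻¹ z w = SU x y z w := by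
  refine (kmod_cancel ?_).symm
  have h := SU_mul1 x y y⁻¹ z w
  rw [mul_inv_cancel] at h
  rw [← h]; exact SU_one1 x z w

theorem SU_inv2 : SU x y z⁻¹ w = SU x y z w := by
  refine (kmod_cancel ?_).symm
  have h := SU_mul2 x y z z⁻¹ w
  rw [mul_inv_cancel] at h
  rw [← h]; exact SU_one2 x y w

theorem SU_inv3 : SU x y z w⁻¹ = SU x y z w := by
  refine (kmod_cancel ?_).symm
  have h := SU_mul3 x y z w w⁻¹
  rw [mul_inv_cancel] at h
  rw [← h]; exact SU_one3 x y z

theorem SU_steinberg01 (h : (x : F) + (y : F) = 1) : SU x y z w = 0 :=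
  symbol_steinberg 0 1 (by decide) ![x, y, z, w] (by simpa using h)
theorem SU_steinberg12 (h : (y : F) + (z : F) = 1) : SU x y z w = 0 :=
  symbol_steinberg 1 2 (by decide) ![x, y, z, w] (by simpa using h)
theorem SU_steinberg23 (h : (z : F) + (w : F) = 1) : SU x y z w = 0 :=
  symbol_steinberg 2 3 (by decide) ![x, y, z, w] (by simpa using h)

end SU

section Char2

variable [CharP F 2]

theorem char2_add_self (t : F) : t + t = 0 := by
  rw [← two_mul, CharTwo.two_eq_zero, zero_mul]

theorem unit_one_add_ne {x : Fˣ} (hx1 : x ≠ 1) : (1 : F) + (x : F) ≠ 0 := by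
  intro h
  apply hx1
  apply Units.ext
  show (x : F) = 1
  linear_combination h - char2_add_self (1 : F)

theorem unit_inv_coe (x : Fˣ) : ((x⁻¹ : Fˣ) : F) = (x : F)⁻¹ := by simp

theorem SU_diag01 (x z w : Fˣ) : SU x x z w = 0 := by
  by_cases hx1 : x = 1
  · rw [hx1]; exact SU_one0 1 z w
  · have ht := unit_one_add_ne hx1
    set u : Fˣ := Units.mk0 _ ht with hu
    have st2 : SU x⁻¹ (u * x⁻¹) z w = 0 := by
      apply SU_steinberg01
      rw [Units.val_mul, unit_inv_coe]
      show (x : F)⁻¹ + (1 + (x : F)) * (x : F)⁻¹ = 1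
      have hx0 : (x : F) ≠ 0 := x.ne_zero
      field_simp
      linear_combination char2_add_self (1 : F)
    have st1 : SU x⁻¹ u z w = 0 := by
      rw [SU_inv0]
      apply SU_steinberg01
      show (x : F) + (1 + (x : F)) = 1
      linear_combination char2_add_self (x : F)
    rw [SU_mul1, st1, SU_inv0, SU_inv1, zero_add] at st2
    exact st2

theorem SU_diag12 (x y w : Fˣ) : SU x y y w = 0 := by
  by_cases hy1 : y = 1
  · rw [hy1]; exact SU_one1 x 1 w
  · have ht := unit_one_add_ne hy1
    set u : Fˣ := Units.mk0 _ ht with hu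
    have st2 : SU x y⁻¹ (u * y⁻¹) w = 0 := by
      apply SU_steinberg12
      rw [Units.val_mul, unit_inv_coe]
      show (y : F)⁻¹ + (1 + (y : F)) * (y : F)⁻¹ = 1
      have hy0 : (y : F) ≠ 0 := y.ne_zero
      field_simp
      linear_combination char2_add_self (1 : F)
    have st1 : SU x y⁻¹ u w = 0 := by
      rw [SU_inv1]
      apply SU_steinberg12
      show (y : F) + (1 + (y : F)) = 1
      linear_combination char2_add_self (y : F)
    rw [SU_mul2, st1, SU_inv1, SU_inv2, zero_add] at st2
    exact st2

theorem SU_diag23 (x y z : Fˣ) : SU x y z z = 0 := by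
  by_cases hz1 : z = 1
  · rw [hz1]; exact SU_one2 x y 1
  · have ht := unit_one_add_ne hz1
    set u : Fˣ := Units.mk0 _ ht with hu
    have st2 : SU x y z⁻¹ (u * z⁻¹) = 0 := by
      apply SU_steinberg23
      rw [Units.val_mul, unit_inv_coe]
      show (z : F)⁻¹ + (1 + (z : F)) * (z : F)⁻¹ = 1
      have hz0 : (z : F) ≠ 0 := z.ne_zero
      field_simp
      linear_combination char2_add_self (1 : F)
    have st1 : SU x y z⁻¹ u = 0 := by
      rw [SU_inv2]
      apply SU_steinberg23
      show (z : F) + (1 + (z : F)) = 1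
      linear_combination char2_add_self (z : F)
    rw [SU_mul3, st1, SU_inv2, SU_inv3, zero_add] at st2
    exact st2

theorem SU_swap01 (x y z w : Fˣ) : SU x y z w = SU y x z w := by
  apply kmod_cancel
  have h := SU_diag01 (x * y) z w
  rw [SU_mul0, SU_mul1, SU_mul1, SU_diag01, SU_diag01, zero_add, add_zero] at h
  exact h

theorem SU_swap12 (x y z w : Fˣ) : SU x y z w = SU x z y w := by
  apply kmod_cancel
  have h := SU_diag12 x (y * z) w
  rw [SU_mul1, SU_mul2, SU_mul2, SU_diag12, SU_diag12, zero_add, add_zero] at h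
  exact h

theorem SU_swap23 (x y z w : Fˣ) : SU x y z w = SU x y w z := by
  apply kmod_cancel
  have h := SU_diag23 x y (z * w)
  rw [SU_mul2, SU_mul3, SU_mul3, SU_diag23, SU_diag23, zero_add, add_zero] at h
  exact h

theorem SU_swap02 (x y z w : Fˣ) : SU x y z w = SU z y x w := by
  rw [SU_swap01, SU_swap12, SU_swap01]

theorem SU_swap13 (x y z w : Fˣ) : SU x y z w = SU x w z y := by
  rw [SU_swap12, SU_swap23, SU_swap12]

end Char2

end Stmt5Aux
-- field theory chunk, to be appended inside Stmt5Aux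
namespace Stmt5Aux

set_option synthInstance.maxHeartbeats 1000000
set_option maxHeartbeats 1000000

variable {F : Type*} [Field F] [CharP F 2]

open IntermediateField

theorem mem_sqSubfield {x : F} : x ∈ sqSubfield F ↔ ∃ y : F, x = y ^ 2 := by
  constructor
  · intro hx
    induction hx using Subfield.closure_induction with
    | mem t ht => exact ht
    | one => exact ⟨1, by norm_num⟩
    | add s t hs ht ihs iht =>
      obtain ⟨y, rfl⟩ := ihs
      obtain ⟨z, rfl⟩ := iht
      have h2 : (2 : F) = 0 := CharTwo.two_eq_zero
      exact ⟨y + z, by linear_combination (-(y * z)) * h2⟩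
    | neg t ht iht =>
      obtain ⟨y, rfl⟩ := iht
      have h2 : (2 : F) = 0 := CharTwo.two_eq_zero
      exact ⟨y, by linear_combination (-(y^2)) * h2⟩
    | inv t ht iht =>
      obtain ⟨y, rfl⟩ := iht
      exact ⟨y⁻¹, by rw [inv_pow]⟩
    | mul s t hs ht ihs iht =>
      obtain ⟨y, rfl⟩ := ihs
      obtain ⟨z, rfl⟩ := iht
      exact ⟨y * z, by ring⟩
  · rintro ⟨y, rfl⟩
    exact Subfield.subset_closure ⟨y, rfl⟩

theorem sq_mem_adjoin (S : Set F) (t : F) :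
    t ^ 2 ∈ adjoin (sqSubfield F) S := by
  have h : t ^ 2 ∈ sqSubfield F := mem_sqSubfield.mpr ⟨t, rfl⟩
  have := IntermediateField.algebraMap_mem (adjoin (sqSubfield F) S) (⟨t ^ 2, h⟩ : sqSubfield F)
  exact this

theorem square_of_mem_adjoin_empty {p : F}
    (hp : p ∈ adjoin (sqSubfield F) (∅ : Set F)) : ∃ α : F, p = α ^ 2 := by
  rw [adjoin_empty, IntermediateField.mem_bot] at hp
  obtain ⟨y, rfl⟩ := hp
  obtain ⟨α, hα⟩ := mem_sqSubfield.mp y.2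
  exact ⟨α, hα⟩

theorem mem_adjoin_insert {S : Set F} {t x : F}
    (hx : x ∈ adjoin (sqSubfield F) (insert t S)) :
    ∃ p ∈ adjoin (sqSubfield F) S, ∃ q ∈ adjoin (sqSubfield F) S, x = p + q * t := by
  induction hx using IntermediateField.adjoin_induction with
  | mem u hu =>
    rcases hu with rfl | hu
    · exact ⟨0, zero_mem _, 1, one_mem _, by ring⟩
    · exact ⟨u, subset_adjoin _ _ hu, 0, zero_mem _, by ring⟩
  | algebraMap k => exact ⟨algebraMap _ _ k, IntermediateField.algebraMap_mem _ k, 0, zero_mem _, by ring⟩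
  | add u v hu hv ihu ihv =>
    obtain ⟨p, hp, q, hq, rfl⟩ := ihu
    obtain ⟨r, hr, s, hs, rfl⟩ := ihv
    exact ⟨p + r, add_mem hp hr, q + s, add_mem hq hs, by ring⟩
  | mul u v hu hv ihu ihv =>
    obtain ⟨p, hp, q, hq, rfl⟩ := ihu
    obtain ⟨r, hr, s, hs, rfl⟩ := ihv
    refine ⟨p * r + q * s * t ^ 2,
      add_mem (mul_mem hp hr) (mul_mem (mul_mem hq hs) (sq_mem_adjoin S t)),
      p * s + q * r, add_mem (mul_mem hp hs) (mul_mem hq hr), by ring⟩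
  | inv u hu ihu =>
    obtain ⟨p, hp, q, hq, rfl⟩ := ihu
    by_cases h0 : p + q * t = 0
    · exact ⟨0, zero_mem _, 0, zero_mem _, by rw [h0, inv_zero]; ring⟩
    · have hN : (p + q * t) ^ 2 = p ^ 2 + q ^ 2 * t ^ 2 := by
        linear_combination (p * q * t) * char2_add_self (1 : F)
      have hNmem : (p + q * t) ^ 2 ∈ adjoin (sqSubfield F) S := by
        rw [hN]
        exact add_mem (pow_mem hp 2) (mul_mem (pow_mem hq 2) (sq_mem_adjoin S t))
      have hNne : ((p + q * t) ^ 2 : F) ≠ 0 := pow_ne_zero _ h0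
      refine ⟨p * ((p + q * t) ^ 2)⁻¹, mul_mem hp (inv_mem hNmem),
        q * ((p + q * t) ^ 2)⁻¹, mul_mem hq (inv_mem hNmem), ?_⟩
      field_simp

/-- linear map `E × E → adjoin (insert t S)`, `(p, q) ↦ p + q t`. -/
noncomputable def insMap (S : Set F) (t : F) :
    (adjoin (sqSubfield F) S × adjoin (sqSubfield F) S) →ₗ[sqSubfield F]
      adjoin (sqSubfield F) (insert t S) where
  toFun pq := ⟨(pq.1 : F) + (pq.2 : F) * t,
    add_mem (adjoin.mono _ _ _ (Set.subset_insert t S) pq.1.2)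
      (mul_mem (adjoin.mono _ _ _ (Set.subset_insert t S) pq.2.2)
        (subset_adjoin _ _ (Set.mem_insert t S)))⟩
  map_add' pq pq' := by
    apply Subtype.ext
    simp only [Prod.fst_add, Prod.snd_add]
    push_cast
    ring
  map_smul' k pq := by
    apply Subtype.ext
    push_cast
    simp [Algebra.smul_def]
    ring

theorem insMap_surjective (S : Set F) (t : F) : Function.Surjective (insMap S t) := by
  rintro ⟨x, hx⟩
  obtain ⟨p, hp, q, hq, rfl⟩ := mem_adjoin_insert hx
  exact ⟨(⟨p, hp⟩, ⟨q, hq⟩), rfl⟩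

theorem fd_adjoin_insert (S : Set F) (t : F)
    [FiniteDimensional (sqSubfield F) (adjoin (sqSubfield F) S)] :
    FiniteDimensional (sqSubfield F) (adjoin (sqSubfield F) (insert t S)) :=
  Module.Finite.of_surjective (insMap S t) (insMap_surjective S t)

theorem insMap_injective {S : Set F} {t : F} (ht : t ∉ adjoin (sqSubfield F) S) :
    Function.Injective (insMap S t) := by
  rw [injective_iff_map_eq_zero]
  rintro ⟨⟨p, hp⟩, ⟨q, hq⟩⟩ h
  have h0 : p + q * t = 0 := congrArg Subtype.val h
  have hq0 : q = 0 := by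
    by_contra hq0
    apply ht
    have : t = -(p / q) := by field_simp; linear_combination h0
    rw [this]
    exact neg_mem (div_mem hp hq)
  have hp0 : p = 0 := by rw [hq0, zero_mul, add_zero] at h0; exact h0
  apply Prod.ext <;> apply Subtype.ext <;> simp [hp0, hq0]

theorem finrank_adjoin_insert {S : Set F} {t : F}
    [FiniteDimensional (sqSubfield F) (adjoin (sqSubfield F) S)]
    (ht : t ∉ adjoin (sqSubfield F) S) :
    Module.finrank (sqSubfield F) (adjoin (sqSubfield F) (insert t S))
      = 2 * Module.finrank (sqSubfield F) (adjoin (sqSubfield F) S) := by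
  have e := LinearEquiv.ofBijective (insMap S t) ⟨insMap_injective ht, insMap_surjective S t⟩
  rw [← e.finrank_eq, Module.finrank_prod, two_mul]

end Stmt5Aux
namespace Stmt5Aux

variable {F : Type*} [Field F] [CharP F 2]

open IntermediateField

theorem lemA (a e y z : Fˣ) (hmem : (e : F) ∈ adjoin (sqSubfield F) {(a : F)}) :
    SU a e y z = 0 := by
  have hmem' : (e : F) ∈ adjoin (sqSubfield F) (insert (a : F) (∅ : Set F)) := by
    simpa using hmem
  obtain ⟨p, hp, q, hq, hE⟩ := mem_adjoin_insert hmem'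
  obtain ⟨α, rfl⟩ := square_of_mem_adjoin_empty hp
  obtain ⟨β, rfl⟩ := square_of_mem_adjoin_empty hq
  by_cases hβ : β = 0
  · have hα : α ≠ 0 := by
      intro h
      apply e.ne_zero
      rw [hE, h, hβ]; ring
    have he : e = Units.mk0 α hα * Units.mk0 α hα := by
      apply Units.ext
      rw [Units.val_mul, Units.val_mk0]
      rw [hE, hβ]; ring
    rw [he]
    exact SU_sq1 a (Units.mk0 α hα) y z
  · by_cases hα : α = 0
    · set B := Units.mk0 β hβ with hB
      have he : e = B * B * a := by
        apply Units.ext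
        rw [Units.val_mul, Units.val_mul, hB, Units.val_mk0]
        rw [hE, hα]; ring
      rw [he, SU_mul1 a (B * B) a y z, SU_sq1 a B y z, zero_add]
      exact SU_diag01 a y z
    · set A := Units.mk0 α hα with hA
      set B := Units.mk0 β hβ with hB
      have he0 : (e : F) ≠ 0 := e.ne_zero
      have st : SU (A * A * e⁻¹) (B * B * a * e⁻¹) y z = 0 := by
        apply SU_steinberg01
        simp only [hA, hB, Units.val_mul, Units.val_mk0, unit_inv_coe]
        field_simp
        linear_combination -hE
      rw [SU_mul0 (A * A) e⁻¹ (B * B * a * e⁻¹) y z, SU_sq0 A (B * B * a * e⁻¹) y z,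
        zero_add, SU_mul1 e⁻¹ (B * B * a) e⁻¹ y z, SU_diag01 e⁻¹ y z, add_zero,
        SU_mul1 e⁻¹ (B * B) a y z, SU_sq1 e⁻¹ B y z, zero_add, SU_inv0] at st
      rw [SU_swap01 a e y z]
      exact st

theorem lemB (a b e y : Fˣ) (hmem : (e : F) ∈ adjoin (sqSubfield F) {(a : F), (b : F)}) :
    SU a b e y = 0 := by
  have hset : ({(a : F), (b : F)} : Set F) = insert (b : F) {(a : F)} := by
    ext u; simp [Set.mem_insert_iff]; tauto
  rw [hset] at hmem
  obtain ⟨p, hp, q, hq, hE⟩ := mem_adjoin_insert hmem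
  by_cases hq0 : q = 0
  · have hpe : (e : F) ∈ adjoin (sqSubfield F) {(a : F)} := by
      have : (e : F) = p := by rw [hE, hq0]; ring
      rw [this]; exact hp
    rw [SU_swap12 a b e y]
    exact lemA a e b y hpe
  · by_cases hp0 : p = 0
    · set Q := Units.mk0 q hq0 with hQ
      have hqe : (Q : F) ∈ adjoin (sqSubfield F) {(a : F)} := by
        rw [hQ, Units.val_mk0]; exact hq
      have he : e = Q * b := by
        apply Units.ext
        rw [Units.val_mul, hQ, Units.val_mk0]
        rw [hE, hp0]; ring
      rw [he, SU_mul2 a b Q b y, SU_diag12 a b y, add_zero, SU_swap12 a b Q y]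
      exact lemA a Q b y hqe
    · set P := Units.mk0 p hp0 with hP
      set Q := Units.mk0 q hq0 with hQ
      have hpe : (P : F) ∈ adjoin (sqSubfield F) {(a : F)} := by
        rw [hP, Units.val_mk0]; exact hp
      have hqe : (Q : F) ∈ adjoin (sqSubfield F) {(a : F)} := by
        rw [hQ, Units.val_mk0]; exact hq
      have he0 : (e : F) ≠ 0 := e.ne_zero
      have st : SU (P * e⁻¹) (Q * b * e⁻¹) a y = 0 := by
        apply SU_steinberg01
        simp only [hP, hQ, Units.val_mul, Units.val_mk0, unit_inv_coe]
        field_simp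
        linear_combination -hE
      have hPkill : SU P (Q * b * e⁻¹) a y = 0 := by
        rw [SU_swap12 P (Q * b * e⁻¹) a y, SU_swap01 P a (Q * b * e⁻¹) y]
        exact lemA a P (Q * b * e⁻¹) y hpe
      have hQkill : SU e⁻¹ Q a y = 0 := by
        rw [SU_swap01 e⁻¹ Q a y, SU_swap12 Q e⁻¹ a y, SU_swap01 Q a e⁻¹ y]
        exact lemA a Q e⁻¹ y hqe
      rw [SU_mul0 P e⁻¹ (Q * b * e⁻¹) a y, hPkill, zero_add,
        SU_mul1 e⁻¹ (Q * b) e⁻¹ a y, SU_diag01 e⁻¹ a y, add_zero,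
        SU_mul1 e⁻¹ Q b a y, hQkill, zero_add, SU_inv0] at st
      rw [SU_swap02 a b e y]
      exact st

theorem lemC (a b c e : Fˣ)
    (hmem : (e : F) ∈ adjoin (sqSubfield F) {(a : F), (b : F), (c : F)}) :
    SU a b c e = 0 := by
  have hset : ({(a : F), (b : F), (c : F)} : Set F)
      = insert (c : F) {(a : F), (b : F)} := by
    ext u; simp [Set.mem_insert_iff]; tauto
  rw [hset] at hmem
  obtain ⟨p, hp, q, hq, hE⟩ := mem_adjoin_insert hmem
  by_cases hq0 : q = 0
  · have hpe : (e : F) ∈ adjoin (sqSubfield F) {(a : F), (b : F)} := by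
      have : (e : F) = p := by rw [hE, hq0]; ring
      rw [this]; exact hp
    rw [SU_swap23 a b c e]
    exact lemB a b e c hpe
  · by_cases hp0 : p = 0
    · set Q := Units.mk0 q hq0 with hQ
      have hqe : (Q : F) ∈ adjoin (sqSubfield F) {(a : F), (b : F)} := by
        rw [hQ, Units.val_mk0]; exact hq
      have he : e = Q * c := by
        apply Units.ext
        rw [Units.val_mul, hQ, Units.val_mk0]
        rw [hE, hp0]; ring
      rw [he, SU_mul3 a b c Q c, SU_diag23 a b c, add_zero, SU_swap23 a b c Q]
      exact lemB a b Q c hqe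
    · set P := Units.mk0 p hp0 with hP
      set Q := Units.mk0 q hq0 with hQ
      have hpe : (P : F) ∈ adjoin (sqSubfield F) {(a : F), (b : F)} := by
        rw [hP, Units.val_mk0]; exact hp
      have hqe : (Q : F) ∈ adjoin (sqSubfield F) {(a : F), (b : F)} := by
        rw [hQ, Units.val_mk0]; exact hq
      have he0 : (e : F) ≠ 0 := e.ne_zero
      have st : SU (P * e⁻¹) (Q * c * e⁻¹) a b = 0 := by
        apply SU_steinberg01
        simp only [hP, hQ, Units.val_mul, Units.val_mk0, unit_inv_coe]
        field_simp
        linear_combination -hE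
      have hPkill : SU P (Q * c * e⁻¹) a b = 0 := by
        rw [SU_swap02 P (Q * c * e⁻¹) a b, SU_swap13 a (Q * c * e⁻¹) P b]
        exact lemB a b P (Q * c * e⁻¹) hpe
      have hQkill : SU e⁻¹ Q a b = 0 := by
        rw [SU_swap02 e⁻¹ Q a b, SU_swap13 a Q e⁻¹ b, SU_swap23 a b e⁻¹ Q]
        exact lemB a b Q e⁻¹ hqe
      rw [SU_mul0 P e⁻¹ (Q * c * e⁻¹) a b, hPkill, zero_add,
        SU_mul1 e⁻¹ (Q * c) e⁻¹ a b, SU_diag01 e⁻¹ a b, add_zero,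
        SU_mul1 e⁻¹ Q c a b, hQkill, zero_add, SU_inv0] at st
      rw [SU_swap13 a b c e, SU_swap01 a e c b, SU_swap12 e a c b]
      exact st

theorem s4_eq {a b c d : F} (ha : a ≠ 0) (hb : b ≠ 0) (hc : c ≠ 0) (hd : d ≠ 0) :
    s4 1 a b c d
      = SU (Units.mk0 a ha) (Units.mk0 b hb) (Units.mk0 c hc) (Units.mk0 d hd) := by
  unfold s4
  rw [dif_pos ⟨ha, hb, hc, hd⟩]
  rfl

end Stmt5Aux
open Stmt5Aux IntermediateField in
set_option synthInstance.maxHeartbeats 1000000 in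
set_option maxHeartbeats 1000000 in
/-- if `[F²(a,b,c,d) : F²] ≤ 8`, then `{a,b,c,d}₂ = 0` in
`K₄(F)/2K₄(F)`. -/
theorem stmt5 (F : Type*) [Field F] [CharP F 2] (a b c d : F)
    (ha : a ≠ 0) (hb : b ≠ 0) (hc : c ≠ 0) (hd : d ≠ 0)
    (hdeg : Module.finrank (sqSubfield F)
      (IntermediateField.adjoin (sqSubfield F) ({a, b, c, d} : Set F)) ≤ 8) :
    s4 1 a b c d = (0 : KMod F 4 1) := by
  classical
  by_cases h1 : ∃ α : F, a = α ^ 2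
  · obtain ⟨α, hα⟩ := h1
    have hα0 : α ≠ 0 := by
      intro h; apply ha; rw [hα, h]; ring
    have hmk : Units.mk0 a ha = Units.mk0 α hα0 * Units.mk0 α hα0 := by
      apply Units.ext
      simp only [Units.val_mul, Units.val_mk0]
      rw [hα]; ring
    rw [s4_eq ha hb hc hd, hmk]
    exact SU_sq0 _ _ _ _
  by_cases h2 : b ∈ adjoin (sqSubfield F) {a}
  · rw [s4_eq ha hb hc hd]
    exact lemA (Units.mk0 a ha) (Units.mk0 b hb) _ _ (by simpa using h2)
  by_cases h3 : c ∈ adjoin (sqSubfield F) {a, b}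
  · rw [s4_eq ha hb hc hd]
    exact lemB (Units.mk0 a ha) (Units.mk0 b hb) (Units.mk0 c hc) _ (by simpa using h3)
  by_cases h4 : d ∈ adjoin (sqSubfield F) {a, b, c}
  · rw [s4_eq ha hb hc hd]
    exact lemC (Units.mk0 a ha) (Units.mk0 b hb) (Units.mk0 c hc) (Units.mk0 d hd)
      (by simpa using h4)
  · exfalso
    have e1 : ({a} : Set F) = insert a ∅ := by simp
    have e2 : ({a, b} : Set F) = insert b {a} := by ext u; simp [Set.mem_insert_iff]; tauto
    have e3 : ({a, b, c} : Set F) = insert c {a, b} := by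
      ext u; simp [Set.mem_insert_iff]; tauto
    have e4 : ({a, b, c, d} : Set F) = insert d {a, b, c} := by
      ext u; simp [Set.mem_insert_iff]; tauto
    have h1' : a ∉ adjoin (sqSubfield F) (∅ : Set F) := by
      rw [adjoin_empty, IntermediateField.mem_bot]
      rintro ⟨y, hy⟩
      obtain ⟨α, hα⟩ := mem_sqSubfield.mp y.2
      exact h1 ⟨α, by rw [← hy]; exact hα⟩
    haveI fd0 : FiniteDimensional (sqSubfield F) (adjoin (sqSubfield F) (∅ : Set F)) := by
      rw [adjoin_empty]; infer_instance
    haveI fd1 : FiniteDimensional (sqSubfield F) (adjoin (sqSubfield F) ({a} : Set F)) := by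
      rw [e1]; exact fd_adjoin_insert _ _
    haveI fd2 : FiniteDimensional (sqSubfield F) (adjoin (sqSubfield F) ({a, b} : Set F)) := by
      rw [e2]; exact fd_adjoin_insert _ _
    haveI fd3 : FiniteDimensional (sqSubfield F)
        (adjoin (sqSubfield F) ({a, b, c} : Set F)) := by
      rw [e3]; exact fd_adjoin_insert _ _
    have r0 : Module.finrank (sqSubfield F) (adjoin (sqSubfield F) (∅ : Set F)) = 1 := by
      rw [adjoin_empty]; exact IntermediateField.finrank_bot
    have r1 : Module.finrank (sqSubfield F) (adjoin (sqSubfield F) ({a} : Set F)) = 2 := by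
      rw [e1, finrank_adjoin_insert h1', r0]
    have r2 : Module.finrank (sqSubfield F) (adjoin (sqSubfield F) ({a, b} : Set F)) = 4 := by
      have h2' : b ∉ adjoin (sqSubfield F) ({a} : Set F) := h2
      rw [e2, finrank_adjoin_insert h2', r1]
    have r3 : Module.finrank (sqSubfield F)
        (adjoin (sqSubfield F) ({a, b, c} : Set F)) = 8 := by
      rw [e3, finrank_adjoin_insert h3, r2]
    have r4 : Module.finrank (sqSubfield F)
        (adjoin (sqSubfield F) ({a, b, c, d} : Set F)) = 16 := by
      rw [e4, finrank_adjoin_insert h4, r3]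
    rw [r4] at hdeg
    omega
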